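/- Let K be a field of characteristic zero, let B ⊆ ℕ₀ⁿ be a submonoid, and let M ⊆ B. Suppose that for every J ⊆ {1,…,n}, the subgroup of ℤⁿ generated by B_J := { b ∈ B : supp(b) ⊆ J } is generated by M_J := { m ∈ M : supp(m) ⊆ J }. Then for all b ∈ B and v, w ∈ Kⁿ with x^b(v) ≠ x^b(w), there exists m in the submonoid generated by M with x^m(v) ≠ x^m(w). -/

import Mathlib

lemma sub_decomp {G : Type*} [AddCommGroup G] (S : Set G) {x : G}
    (hx : x ∈ AddSubgroup.closure S) :
    ∃ p ∈ AddSubmonoid.closure S, ∃ q ∈ AddSubmonoid.closure S, x = p - q := by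
  induction hx using AddSubgroup.closure_induction with
  | mem s hs => exact ⟨s, AddSubmonoid.subset_closure hs, 0, zero_mem _, by simp⟩
  | zero => exact ⟨0, zero_mem _, 0, zero_mem _, by simp⟩
  | add a b _ _ ha hb =>
      obtain ⟨p, hp, q, hq, rfl⟩ := ha
      obtain ⟨p', hp', q', hq', rfl⟩ := hb
      exact ⟨p + p', add_mem hp hp', q + q', add_mem hq hq', by abel⟩
  | neg a _ ha =>
      obtain ⟨p, hp, q, hq, rfl⟩ := ha
      exact ⟨q, hq, p, hp, by abel⟩

lemma supp_closure {n : ℕ} (J : Set (Fin n)) (T : Set (Fin n → ℕ))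
    (hT : ∀ t ∈ T, {i | t i ≠ 0} ⊆ J) {m : Fin n → ℕ}
    (hm : m ∈ AddSubmonoid.closure T) : {i | m i ≠ 0} ⊆ J := by
  induction hm using AddSubmonoid.closure_induction with
  | mem t ht => exact hT t ht
  | zero => intro i hi; simp at hi
  | add a b _ _ ha hb =>
      intro i hi
      simp only [Set.mem_setOf_eq, Pi.add_apply, ne_eq, Nat.add_eq_zero] at hi
      rcases Decidable.em (a i = 0) with h | h
      · exact hb (fun h' => hi ⟨h, h'⟩)
      · exact ha h

/-- if for every `J` the subgroup of ℤⁿ generated by `B_J` is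
generated by `M_J`, then monomials with exponents in the monoid generated by
`M` separate any points separated by the invariant monomials `x^b`, `b ∈ B`
(characteristic zero). -/
theorem separating_of_closure_eq
    (K : Type*) [Field K] [CharZero K] (n : ℕ)
    (B : AddSubmonoid (Fin n → ℕ)) (M : Set (Fin n → ℕ))
    (hMB : M ⊆ (B : Set (Fin n → ℕ)))
    (ι : (Fin n → ℕ) → (Fin n → ℤ)) (hι : ι = fun m i => (m i : ℤ))
    (hyp : ∀ J : Set (Fin n),
      AddSubgroup.closure (ι '' {b | b ∈ B ∧ {i | b i ≠ 0} ⊆ J}) =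
      AddSubgroup.closure (ι '' {m | m ∈ M ∧ {i | m i ≠ 0} ⊆ J})) :
    ∀ b ∈ B, ∀ v w : Fin n → K, (∏ i, v i ^ b i) ≠ (∏ i, w i ^ b i) →
      ∃ m ∈ AddSubmonoid.closure M, (∏ i, v i ^ m i) ≠ (∏ i, w i ^ m i) := by
  intro b hb v w hvw
  by_contra hcon
  push_neg at hcon
  -- ι as an additive monoid hom
  set f : (Fin n → ℕ) →+ (Fin n → ℤ) :=
    { toFun := ι
      map_zero' := by subst hι; funext i; simp
      map_add' := by subst hι; intro a b; funext i; simp } with hf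
  have hfinj : Function.Injective f := by
    intro a b hab
    funext i
    have := congrFun hab i
    simp only [hf, hι, AddMonoidHom.coe_mk, ZeroHom.coe_mk] at this
    exact_mod_cast this
  set J : Set (Fin n) := {i | b i ≠ 0} with hJ
  -- b is in the subgroup closure of ι '' M_J
  have hbmem : ι b ∈ AddSubgroup.closure (ι '' {m | m ∈ M ∧ {i | m i ≠ 0} ⊆ J}) := by
    rw [← hyp J]
    exact AddSubgroup.subset_closure ⟨b, ⟨hb, fun i hi => hi⟩, rfl⟩
  obtain ⟨p, hp, q, hq, hpq⟩ := sub_decomp _ hbmem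
  -- lift p, q back to ℕⁿ
  set MJ : Set (Fin n → ℕ) := {m | m ∈ M ∧ {i | m i ≠ 0} ⊆ J} with hMJ
  have hmap : AddSubmonoid.closure (ι '' MJ) = AddSubmonoid.map f (AddSubmonoid.closure MJ) := by
    rw [AddMonoidHom.map_mclosure]; rfl
  rw [hmap] at hp hq
  obtain ⟨m, hm, hmp⟩ := hp
  obtain ⟨r, hr, hrq⟩ := hq
  -- b + r = m
  have hbrm : b + r = m := by
    apply hfinj
    have : f b = f m - f r := by rw [hmp, hrq]; exact hpq
    rw [map_add, this]; abel
  have hmM : m ∈ AddSubmonoid.closure M :=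
    AddSubmonoid.closure_mono (fun x hx => hx.1) hm
  have hrM : r ∈ AddSubmonoid.closure M :=
    AddSubmonoid.closure_mono (fun x hx => hx.1) hr
  have hsuppr : {i | r i ≠ 0} ⊆ J := supp_closure J MJ (fun t ht => ht.2) hr
  have hsuppm : {i | m i ≠ 0} ⊆ J := supp_closure J MJ (fun t ht => ht.2) hm
  -- products split
  have hsplit : ∀ u : Fin n → K, (∏ i, u i ^ m i) = (∏ i, u i ^ b i) * ∏ i, u i ^ r i := by
    intro u
    rw [← Finset.prod_mul_distrib]
    refine Finset.prod_congr rfl fun i _ => ?_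
    rw [← pow_add, ← hbrm]; rfl
  -- nonvanishing helper
  have key : ∀ u : Fin n → K, (∏ i, u i ^ b i) ≠ 0 → ∀ i ∈ J, u i ≠ 0 := by
    intro u hu i hi hui
    apply hu
    apply Finset.prod_eq_zero (Finset.mem_univ i)
    rw [hui]
    exact zero_pow hi
  have hnezero : ∀ (u : Fin n → K), (∀ i ∈ J, u i ≠ 0) → (c : Fin n → ℕ) →
      {i | c i ≠ 0} ⊆ J → (∏ i, u i ^ c i) ≠ 0 := by
    intro u hu c hc
    apply Finset.prod_ne_zero_iff.mpr
    intro i _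
    rcases Decidable.em (c i = 0) with h | h
    · simp [h]
    · exact pow_ne_zero _ (hu i (hc h))
  by_cases hv0 : (∏ i, v i ^ b i) = 0
  · -- then x^b(w) ≠ 0, x^m(v) = 0, x^m(w) ≠ 0
    have hw0 : (∏ i, w i ^ b i) ≠ 0 := fun h => hvw (hv0.trans h.symm)
    -- some i with v i = 0, b i ≠ 0
    obtain ⟨i, _, hvi⟩ := Finset.prod_eq_zero_iff.mp hv0
    have hbi : b i ≠ 0 := fun h => by rw [h] at hvi; simp at hvi
    have hvi0 : v i = 0 := pow_eq_zero_iff hbi |>.mp hvi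
    have hmv : (∏ i, v i ^ m i) = 0 := by
      apply Finset.prod_eq_zero (Finset.mem_univ i)
      rw [hvi0]
      apply zero_pow
      rw [← hbrm]
      simp only [Pi.add_apply]
      omega
    have hmw : (∏ i, w i ^ m i) ≠ 0 := hnezero w (key w hw0) m hsuppm
    exact hmw ((hcon m hmM).symm.trans hmv)
  · by_cases hw0 : (∏ i, w i ^ b i) = 0
    · obtain ⟨i, _, hwi⟩ := Finset.prod_eq_zero_iff.mp hw0
      have hbi : b i ≠ 0 := fun h => by rw [h] at hwi; simp at hwi
      have hwi0 : w i = 0 := pow_eq_zero_iff hbi |>.mp hwi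
      have hmw : (∏ i, w i ^ m i) = 0 := by
        apply Finset.prod_eq_zero (Finset.mem_univ i)
        rw [hwi0]
        apply zero_pow
        rw [← hbrm]
        simp only [Pi.add_apply]
        omega
      have hmv : (∏ i, v i ^ m i) ≠ 0 := hnezero v (key v hv0) m hsuppm
      exact hmv ((hcon m hmM).trans hmw)
    · -- both nonzero: cancel
      have hrv : (∏ i, v i ^ r i) ≠ 0 := hnezero v (key v hv0) r hsuppr
      have h1 : (∏ i, v i ^ b i) * ∏ i, v i ^ r i = (∏ i, w i ^ b i) * ∏ i, w i ^ r i := by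
        rw [← hsplit v, ← hsplit w]; exact hcon m hmM
      rw [hcon r hrM] at h1
      exact hvw (mul_right_cancel₀ ((hcon r hrM) ▸ hrv) h1)
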